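/- arXiv:2507.11248 — 2 statements merged into one kernel-verified Lean document; each statement's English description precedes it below -/
import Mathlib

section
/- Let δ₀ > 0, b₀ > 0, I₀ > 0 and set Ω_b = {z ∈ ℂ : |z| < δ₀, Im z < I₀ b}. Suppose f₀ is analytic on B_{δ₀}(0) with f₀(z) = z^{k₀} g₀(z) for some k₀ ∈ ℕ and g₀ analytic and nonvanishing on B_{δ₀}(0); suppose f_b is analytic on Ω_b for 0 < b ≤ b₀ with sup_{0<b≤b₀} ‖f_b‖_{C^{k₀+1}(Ω_b)} < ∞ and ‖f_b − f₀‖_{C^{k₀+1}(Ω_b)} → 0 as b → 0; suppose there are zeros z₁(b), …, z_{k₀}(b) of f_b with z_j(0) = 0, |z_j(b)| ≤ I₀b/3; and, if k₀ ≥ 2, assume the z_j(b) are pairwise distinct for b > 0 and there is C* > 1 with C*^{−1} b ≤ |z_j(b) − z_{j′}(b)| ≤ C* b for all pairs (j,j′) ≠ (1,2) with j < j′. Then there exist δ₁ ∈ (0,δ₀] and b₁ ∈ (0,b₀] such that for every 0 < b ≤ b₁ the function g_b(z) = f_b(z) / ∏_{j=1}^{k₀}(z − z_j(b)) is analytic and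 nonvanishing on {|z| < δ₁, Im z < I₀ b}. -/
open Set Metric
open Filter Topology
open scoped Nat

lemma aux_iterDiffOn {U : Set ℂ} (hU : IsOpen U) {f : ℂ → ℂ}
    (hf : DifferentiableOn ℂ f U) (n : ℕ) :
    DifferentiableOn ℂ (iteratedDeriv n f) U := by
  have h : AnalyticOnNhd ℂ (iteratedDeriv n f) U := by
    induction n with
    | zero => simpa [iteratedDeriv_zero] using hf.analyticOnNhd hU
    | succ n ih => rw [iteratedDeriv_succ]; exact ih.deriv
  exact h.differentiableOn

lemma aux_dslope_diffOn {U : Set ℂ} (hU : IsOpen U) {f : ℂ → ℂ}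
    (hf : DifferentiableOn ℂ f U) {a : ℂ} (ha : a ∈ U) :
    DifferentiableOn ℂ (dslope f a) U := by
  intro w hw
  rcases eq_or_ne w a with rfl | hne
  · obtain ⟨p, hp⟩ := hf.analyticOnNhd hU w hw
    exact (hp.has_fpower_series_dslope_fslope).analyticAt.differentiableAt.differentiableWithinAt
  · exact (differentiableWithinAt_dslope_of_ne hne).2 (hf w hw)

lemma aux_leibniz {U : Set ℂ} (hU : IsOpen U) {F : ℂ → ℂ}
    (hF : DifferentiableOn ℂ F U) (a : ℂ) (n : ℕ) :
    ∀ ζ ∈ U, iteratedDeriv (n + 1) (fun w => (w - a) * F w) ζ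
      = (ζ - a) * iteratedDeriv (n + 1) F ζ + ((n : ℂ) + 1) * iteratedDeriv n F ζ := by
  induction n with
  | zero =>
    intro ζ hζ
    have hFζ : DifferentiableAt ℂ F ζ := hF.differentiableAt (hU.mem_nhds hζ)
    have H : HasDerivAt (fun w => (w - a) * F w)
        (1 * F ζ + (ζ - a) * deriv F ζ) ζ :=
      ((hasDerivAt_id ζ).sub_const a).mul hFζ.hasDerivAt
    rw [iteratedDeriv_one, iteratedDeriv_one, iteratedDeriv_zero, H.deriv]
    ring
  | succ n ih =>
    intro ζ hζ
    have hmem : U ∈ 𝓝 ζ := hU.mem_nhds hζ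
    have heq : iteratedDeriv (n + 1) (fun w => (w - a) * F w)
        =ᶠ[𝓝 ζ] fun ξ => (ξ - a) * iteratedDeriv (n + 1) F ξ
          + ((n : ℂ) + 1) * iteratedDeriv n F ξ :=
      Filter.eventuallyEq_of_mem hmem fun ξ hξ => ih ξ hξ
    rw [iteratedDeriv_succ, heq.deriv_eq]
    have h1 : DifferentiableAt ℂ (iteratedDeriv (n + 1) F) ζ :=
      (aux_iterDiffOn hU hF (n + 1)).differentiableAt hmem
    have h0 : DifferentiableAt ℂ (iteratedDeriv n F) ζ :=
      (aux_iterDiffOn hU hF n).differentiableAt hmem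
    have hd1 : HasDerivAt (iteratedDeriv (n + 1) F) (iteratedDeriv (n + 2) F ζ) ζ := by
      have := h1.hasDerivAt
      rwa [← iteratedDeriv_succ] at this
    have hd0 : HasDerivAt (iteratedDeriv n F) (iteratedDeriv (n + 1) F ζ) ζ := by
      have := h0.hasDerivAt
      rwa [← iteratedDeriv_succ] at this
    have H : HasDerivAt (fun ξ => (ξ - a) * iteratedDeriv (n + 1) F ξ
        + ((n : ℂ) + 1) * iteratedDeriv n F ξ)
        ((1 * iteratedDeriv (n + 1) F ζ + (ζ - a) * iteratedDeriv (n + 2) F ζ)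
          + ((n : ℂ) + 1) * iteratedDeriv (n + 1) F ζ) ζ :=
      (((hasDerivAt_id ζ).sub_const a).mul hd1).add (hd0.const_mul _)
    rw [H.deriv]
    push_cast
    ring
lemma aux_key {U : Set ℂ} (hUo : IsOpen U) (hUc : Convex ℝ U) {f : ℂ → ℂ}
    (hf : DifferentiableOn ℂ f U) {a : ℂ} (ha : a ∈ U) (hfa : f a = 0)
    (k : ℕ) (M : ℝ) (hM : ∀ w ∈ U, ‖iteratedDeriv (k + 1) f w‖ ≤ M) :
    ∀ w ∈ U, ‖iteratedDeriv k (dslope f a) w‖ ≤ M / (k + 1) := by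
  intro w hw
  set F := dslope f a with hFdef
  have hFd : DifferentiableOn ℂ F U := aux_dslope_diffOn hUo hf ha
  have hfeq : f = fun x => (x - a) * F x := by
    funext x
    have h1 := sub_smul_dslope f a x
    rw [smul_eq_mul, hfa, sub_zero] at h1
    exact h1.symm
  set u := iteratedDeriv k F with hu
  set D := iteratedDeriv (k + 1) f with hD
  have hrel : ∀ ζ ∈ U, D ζ = (ζ - a) * deriv u ζ + ((k : ℂ) + 1) * u ζ := by
    intro ζ hζ
    rw [hD, hfeq, aux_leibniz hUo hFd a k ζ hζ, iteratedDeriv_succ]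
  set γ : ℝ → ℂ := fun t => a + t • (w - a) with hγ
  have hγmem : ∀ t ∈ Icc (0 : ℝ) 1, γ t ∈ U := fun t ht => hUc.add_smul_sub_mem ha hw ht
  have hudiff : DifferentiableOn ℂ u U := aux_iterDiffOn hUo hFd k
  have hDcont : ContinuousOn D U := (aux_iterDiffOn hUo hf (k + 1)).continuousOn
  have hγcont : Continuous γ := by fun_prop
  have hderiv : ∀ t ∈ uIcc (0 : ℝ) 1,
      HasDerivAt (fun s : ℝ => ((s : ℂ)) ^ (k + 1) * u (γ s)) (((t : ℂ)) ^ k * D (γ t)) t := by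
    intro t ht
    rw [uIcc_of_le zero_le_one] at ht
    have hγt : γ t ∈ U := hγmem t ht
    have hudiffat : DifferentiableAt ℂ u (γ t) := hudiff.differentiableAt (hUo.mem_nhds hγt)
    have hcoe : HasDerivAt (fun s : ℝ => (s : ℂ)) 1 t := by
      simpa using (hasDerivAt_id t).ofReal_comp
    have hpow : HasDerivAt (fun s : ℝ => ((s : ℂ)) ^ (k + 1))
        ((((k : ℂ)) + 1) * (t : ℂ) ^ k) t := by
      have hz := hasDerivAt_pow (k + 1) ((t : ℝ) : ℂ)
      have h2 := HasDerivAt.scomp (x := t) (h := fun s : ℝ => (s : ℂ)) hz hcoe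
      simp only [Function.comp_def] at h2
      refine h2.congr_deriv ?_
      simp only [one_smul]
      push_cast
      ring
    have hγd : HasDerivAt γ (w - a) t := by
      have h3 : HasDerivAt (fun s : ℝ => a + (s : ℂ) * (w - a)) (1 * (w - a)) t :=
        (hcoe.mul_const _).const_add a
      simp only [one_mul] at h3
      simp only [hγ, Complex.real_smul]
      exact h3
    have hcomp : HasDerivAt (fun s : ℝ => u (γ s)) ((w - a) • deriv u (γ t)) t := by
      have h4 := HasDerivAt.scomp (x := t) (h := γ) (hudiffat.hasDerivAt) hγd
      simpa [Function.comp_def] using h4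
    have H := hpow.mul hcomp
    refine H.congr_deriv ?_
    have h2 := hrel (γ t) hγt
    have h3 : γ t - a = (t : ℂ) * (w - a) := by
      rw [hγ]; simp [Complex.real_smul]
    rw [smul_eq_mul]
    rw [h3] at h2
    rw [h2]
    ring
  have hcont : ContinuousOn (fun t : ℝ => ((t : ℂ)) ^ k * D (γ t)) (uIcc (0 : ℝ) 1) := by
    rw [uIcc_of_le zero_le_one]
    exact (Continuous.continuousOn (by fun_prop)).mul
      (hDcont.comp hγcont.continuousOn hγmem)
  have hint : IntervalIntegrable _ MeasureTheory.volume 0 1 := hcont.intervalIntegrable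
  have hFTC := intervalIntegral.integral_eq_sub_of_hasDerivAt hderiv hint
  have hγ1 : γ 1 = w := by rw [hγ]; simp
  have hγ0 : γ 0 = a := by rw [hγ]; simp
  have hval : (∫ t in (0 : ℝ)..1, ((t : ℂ)) ^ k * D (γ t)) = u w := by
    rw [hFTC, hγ1]
    push_cast
    simp
  have hbound : ‖∫ t in (0 : ℝ)..1, ((t : ℂ)) ^ k * D (γ t)‖
      ≤ ∫ t in (0 : ℝ)..1, t ^ k * M := by
    have hptw : ∀ t ∈ Icc (0 : ℝ) 1, ‖((t : ℂ)) ^ k * D (γ t)‖ ≤ t ^ k * M := by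
      intro t ht
      have h1 : ‖((t : ℂ)) ^ k‖ = t ^ k := by
        rw [norm_pow, Complex.norm_real, Real.norm_eq_abs, abs_of_nonneg ht.1]
      rw [norm_mul, h1]
      exact mul_le_mul_of_nonneg_left (hM (γ t) (hγmem t ht)) (pow_nonneg ht.1 k)
    calc ‖∫ t in (0 : ℝ)..1, ((t : ℂ)) ^ k * D (γ t)‖
        ≤ ∫ t in (0 : ℝ)..1, ‖((t : ℂ)) ^ k * D (γ t)‖ :=
          intervalIntegral.norm_integral_le_integral_norm zero_le_one
      _ ≤ ∫ t in (0 : ℝ)..1, t ^ k * M := by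
          apply intervalIntegral.integral_mono_on zero_le_one hint.norm
            (Continuous.intervalIntegrable (by fun_prop) _ _)
          intro t ht
          exact hptw t ht
  have hintval : (∫ t in (0 : ℝ)..1, t ^ k * M) = M / (k + 1) := by
    rw [intervalIntegral.integral_mul_const, integral_pow]
    simp
    ring
  calc ‖u w‖ = ‖∫ t in (0 : ℝ)..1, ((t : ℂ)) ^ k * D (γ t)‖ := by rw [hval]
    _ ≤ ∫ t in (0 : ℝ)..1, t ^ k * M := hbound
    _ = M / (k + 1) := hintval
lemma aux_itersub {U : Set ℂ} (hU : IsOpen U) {f P : ℂ → ℂ}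
    (hf : DifferentiableOn ℂ f U) (hP : Differentiable ℂ P) (c : ℂ) (n : ℕ) :
    ∀ ζ ∈ U, iteratedDeriv n (fun w => f w - c * P w) ζ
      = iteratedDeriv n f ζ - c * iteratedDeriv n P ζ := by
  induction n with
  | zero => intro ζ hζ; simp [iteratedDeriv_zero]
  | succ n ih =>
    intro ζ hζ
    have hmem : U ∈ 𝓝 ζ := hU.mem_nhds hζ
    have heq : iteratedDeriv n (fun w => f w - c * P w) =ᶠ[𝓝 ζ]
        fun ξ => iteratedDeriv n f ξ - c * iteratedDeriv n P ξ :=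
      Filter.eventuallyEq_of_mem hmem ih
    rw [iteratedDeriv_succ, heq.deriv_eq]
    have h1 : HasDerivAt (iteratedDeriv n f) (iteratedDeriv (n + 1) f ζ) ζ := by
      have := ((aux_iterDiffOn hU hf n).differentiableAt hmem).hasDerivAt
      rwa [← iteratedDeriv_succ] at this
    have h2 : HasDerivAt (iteratedDeriv n P) (iteratedDeriv (n + 1) P ζ) ζ := by
      have := ((aux_iterDiffOn isOpen_univ hP.differentiableOn n).differentiableAt
        (x := ζ) Filter.univ_mem).hasDerivAt
      rwa [← iteratedDeriv_succ] at this
    exact (h1.sub (h2.const_mul c)).deriv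

lemma aux_pow_mul {U : Set ℂ} (hU : IsOpen U) (h0 : (0 : ℂ) ∈ U) :
    ∀ (m : ℕ) (h : ℂ → ℂ), DifferentiableOn ℂ h U →
      iteratedDeriv m (fun w => w ^ m * h w) 0 = m ! * h 0 := by
  intro m
  induction m with
  | zero => intro h _; simp [iteratedDeriv_zero]
  | succ m ih =>
    intro h hh
    have hF : DifferentiableOn ℂ (fun w => w ^ m * h w) U :=
      (differentiable_pow m).differentiableOn.mul hh
    have heq : (fun w : ℂ => w ^ (m + 1) * h w)
        = fun w => (w - 0) * ((fun w => w ^ m * h w) w) := by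
      funext w; ring
    rw [heq, aux_leibniz hU hF 0 m 0 h0, ih h hh]
    push_cast [Nat.factorial_succ]
    ring

lemma aux_prod_deriv : ∀ (k : ℕ) (p : Fin k → ℂ) (ζ : ℂ),
    iteratedDeriv k (fun w => ∏ j, (w - p j)) ζ = k ! := by
  intro k
  induction k with
  | zero => intro p ζ; simp [iteratedDeriv_zero]
  | succ k ih =>
    intro p ζ
    have hQ : Differentiable ℂ (fun w : ℂ => ∏ j : Fin k, (w - p j.succ)) :=
      Differentiable.fun_finsetProd fun i _ => differentiable_id.sub_const _
    have heq : (fun w : ℂ => ∏ j : Fin (k + 1), (w - p j))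
        = fun w => (w - p 0) * ((fun w => ∏ j : Fin k, (w - p j.succ)) w) := by
      funext w; rw [Fin.prod_univ_succ]
    rw [heq, aux_leibniz isOpen_univ hQ.differentiableOn (p 0) k ζ (Set.mem_univ ζ)]
    have hconst : iteratedDeriv k (fun w : ℂ => ∏ j : Fin k, (w - p j.succ)) = fun _ => (k ! : ℂ) :=
      funext fun ξ => ih _ ξ
    have hz : iteratedDeriv (k + 1) (fun w : ℂ => ∏ j : Fin k, (w - p j.succ)) ζ = 0 := by
      rw [iteratedDeriv_succ, hconst]
      simp
    rw [hz, hconst]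
    simp only [Nat.factorial_succ]
    push_cast
    ring

lemma aux_iteratedDeriv_congr {f g : ℂ → ℂ} {x : ℂ} (h : f =ᶠ[𝓝 x] g) (n : ℕ) :
    iteratedDeriv n f x = iteratedDeriv n g x := by
  have H : ∀ n, iteratedDeriv n f =ᶠ[𝓝 x] iteratedDeriv n g := by
    intro n
    induction n with
    | zero => simpa [iteratedDeriv_zero] using h
    | succ n ih => rw [iteratedDeriv_succ, iteratedDeriv_succ]; exact ih.deriv
  exact (H n).eq_of_nhds

noncomputable def iterDslope : (k : ℕ) → (Fin k → ℂ) → (ℂ → ℂ) → ℂ → ℂ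
  | 0, _, f => f
  | (k + 1), p, f => iterDslope k (fun j => p j.succ) (dslope f (p 0))

lemma iterDslope_diffOn {U : Set ℂ} (hU : IsOpen U) :
    ∀ (k : ℕ) (p : Fin k → ℂ) (f : ℂ → ℂ), DifferentiableOn ℂ f U → (∀ j, p j ∈ U) →
      DifferentiableOn ℂ (iterDslope k p f) U := by
  intro k
  induction k with
  | zero => intro p f hf _; exact hf
  | succ k ih =>
    intro p f hf hp
    exact ih _ _ (aux_dslope_diffOn hU hf (hp 0)) fun j => hp j.succ

lemma iterDslope_factor :
    ∀ (k : ℕ) (p : Fin k → ℂ) (f : ℂ → ℂ), Function.Injective p → (∀ j, f (p j) = 0) →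
      ∀ w, f w = iterDslope k p f w * ∏ j, (w - p j) := by
  intro k
  induction k with
  | zero => intro p f _ _ w; simp [iterDslope]
  | succ k ih =>
    intro p f hinj hz w
    have hF0 : ∀ j : Fin k, dslope f (p 0) (p j.succ) = 0 := by
      intro j
      have hne : p j.succ ≠ p 0 := fun hcon => Fin.succ_ne_zero j (hinj hcon)
      rw [dslope_of_ne _ hne, slope_def_field, hz, hz]
      simp
    have hIH := ih (fun j => p j.succ) (dslope f (p 0))
      (fun i j hij => Fin.succ_injective _ (hinj hij)) hF0 w
    have hfw : f w = (w - p 0) * dslope f (p 0) w := by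
      have h1 := sub_smul_dslope f (p 0) w
      rw [smul_eq_mul, hz 0, sub_zero] at h1
      exact h1.symm
    rw [Fin.prod_univ_succ]
    show f w = iterDslope k (fun j => p j.succ) (dslope f (p 0)) w * ((w - p 0) * _)
    rw [hfw, hIH]
    ring

lemma iterDslope_lin {U : Set ℂ} (hU : IsOpen U) (c : ℂ) :
    ∀ (k : ℕ) (p : Fin k → ℂ) (f P : ℂ → ℂ), DifferentiableOn ℂ f U →
      DifferentiableOn ℂ P U → (∀ j, p j ∈ U) →
      ∀ w, iterDslope k p (fun x => f x - c * P x) w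
        = iterDslope k p f w - c * iterDslope k p P w := by
  intro k
  induction k with
  | zero => intro p f P _ _ _ w; simp [iterDslope]
  | succ k ih =>
    intro p f P hf hP hp w
    have hds : dslope (fun x => f x - c * P x) (p 0)
        = fun x => dslope f (p 0) x - c * dslope P (p 0) x := by
      funext x
      rcases eq_or_ne x (p 0) with rfl | hne
      · rw [dslope_same, dslope_same, dslope_same]
        have hfat : DifferentiableAt ℂ f (p 0) := hf.differentiableAt (hU.mem_nhds (hp 0))
        have hPat : DifferentiableAt ℂ P (p 0) := hP.differentiableAt (hU.mem_nhds (hp 0))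
        exact (hfat.hasDerivAt.sub (hPat.hasDerivAt.const_mul c)).deriv
      · rw [dslope_of_ne _ hne, dslope_of_ne _ hne, dslope_of_ne _ hne,
          slope_def_field, slope_def_field, slope_def_field]
        have hne' : x - p 0 ≠ 0 := sub_ne_zero.2 hne
        field_simp
        ring
    show iterDslope k (fun j => p j.succ) (dslope (fun x => f x - c * P x) (p 0)) w = _
    rw [hds]
    exact ih _ _ _ (aux_dslope_diffOn hU hf (hp 0)) (aux_dslope_diffOn hU hP (hp 0))
      (fun j => hp j.succ) w

lemma iterDslope_prod :
    ∀ (k : ℕ) (p : Fin k → ℂ), Function.Injective p →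
      ∀ w, iterDslope k p (fun x => ∏ j, (x - p j)) w = 1 := by
  intro k
  induction k with
  | zero => intro p _ w; simp [iterDslope]
  | succ k ih =>
    intro p hinj w
    have hQd : DifferentiableAt ℂ (fun x : ℂ => ∏ j : Fin k, (x - p j.succ)) (p 0) :=
      (Differentiable.fun_finsetProd fun i _ => differentiable_id.sub_const _).differentiableAt
    have hds : dslope (fun x : ℂ => ∏ j : Fin (k + 1), (x - p j)) (p 0)
        = fun x => ∏ j : Fin k, (x - p j.succ) := by
      funext x
      rcases eq_or_ne x (p 0) with rfl | hne
      · rw [dslope_same]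
        have H : HasDerivAt (fun y : ℂ => ∏ j : Fin (k + 1), (y - p j))
            (1 * (∏ j : Fin k, (p 0 - p j.succ)) + (p 0 - p 0) * deriv (fun y : ℂ => ∏ j : Fin k, (y - p j.succ)) (p 0)) (p 0) := by
          have h1 : HasDerivAt (fun y : ℂ => (y - p 0) * ∏ j : Fin k, (y - p j.succ))
              (1 * (∏ j : Fin k, (p 0 - p j.succ)) + (p 0 - p 0) * deriv (fun y : ℂ => ∏ j : Fin k, (y - p j.succ)) (p 0)) (p 0) :=
            ((hasDerivAt_id (p 0)).sub_const (p 0)).mul hQd.hasDerivAt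
          have h2 : (fun y : ℂ => ∏ j : Fin (k + 1), (y - p j))
              = fun y : ℂ => (y - p 0) * ∏ j : Fin k, (y - p j.succ) := by
            funext y; rw [Fin.prod_univ_succ]
          rw [h2]; exact h1
        rw [H.deriv]
        simp
      · rw [dslope_of_ne _ hne, slope_def_field, Fin.prod_univ_succ, Fin.prod_univ_succ]
        rw [sub_self, zero_mul, sub_zero]
        exact mul_div_cancel_left₀ _ (sub_ne_zero.2 hne)
    show iterDslope k (fun j => p j.succ) (dslope (fun x : ℂ => ∏ j : Fin (k + 1), (x - p j)) (p 0)) w = 1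
    rw [hds]
    exact ih (fun j => p j.succ) (fun i j hij => Fin.succ_injective _ (hinj hij)) w
lemma iterDslope_bound :
    ∀ (k : ℕ) {U : Set ℂ}, IsOpen U → Convex ℝ U → ∀ (p : Fin k → ℂ) (f : ℂ → ℂ) (M : ℝ),
      DifferentiableOn ℂ f U → (∀ j, p j ∈ U) → (∀ j, f (p j) = 0) → Function.Injective p →
      (∀ w ∈ U, ‖iteratedDeriv k f w‖ ≤ M) →
      ∀ w ∈ U, ‖iterDslope k p f w‖ ≤ M / k ! := by
  intro k
  induction k with
  | zero =>
    intro U _ _ p f M hf _ _ _ hM w hw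
    simpa [iterDslope] using hM w hw
  | succ k ih =>
    intro U hUo hUc p f M hf hp hz hinj hM w hw
    have hkey := aux_key hUo hUc hf (hp 0) (hz 0) k M hM
    have hF0 : ∀ j : Fin k, dslope f (p 0) (p j.succ) = 0 := by
      intro j
      have hne : p j.succ ≠ p 0 := fun hcon => Fin.succ_ne_zero j (hinj hcon)
      rw [dslope_of_ne _ hne, slope_def_field, hz, hz]
      simp
    have hIH := ih hUo hUc (fun j => p j.succ) (dslope f (p 0)) (M / (k + 1))
      (aux_dslope_diffOn hUo hf (hp 0)) (fun j => hp j.succ) hF0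
      (fun i j hij => Fin.succ_injective _ (hinj hij)) hkey w hw
    have harith : M / (k + 1) / k ! = M / (k + 1)! := by
      rw [div_div, Nat.factorial_succ]
      push_cast
      ring_nf
    show ‖iterDslope k (fun j => p j.succ) (dslope f (p 0)) w‖ ≤ M / (k + 1)!
    rw [← harith]
    exact hIH
/-- Uniqueness of zeros for a degenerate bifurcation of analytic functions
(substitute for Rouché's theorem on the shrinking regions
`Ω_b = {|z| < δ₀, Im z < I₀ b}`):  if `f₀ = z^{k₀} g₀` with `g₀` analytic and
nonvanishing on `B_{δ₀}(0)`, the family `f_b` is analytic on `Ω_b`, uniformly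
bounded in `C^{k₀+1}` and converging to `f₀` in `C^{k₀+1}` as `b → 0`, and `f_b`
has `k₀` zeros `z_j(b)` with `z_j(0) = 0`, `|z_j(b)| ≤ I₀b/3`, pairwise distinct and
`b`-equidistributed except possibly the pair `(1,2)`, then for some `δ₁ ≤ δ₀`,
`b₁ ≤ b₀` and each `0 < b ≤ b₁`, `g_b = f_b/∏_j(z−z_j(b))` is analytic and
nonvanishing on `{|z| < δ₁, Im z < I₀ b}`. -/
theorem statement16 (δ₀ b₀ I₀ : ℝ) (hδ₀ : 0 < δ₀) (hb₀ : 0 < b₀) (hI₀ : 0 < I₀)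
    (k₀ : ℕ) (f₀ g₀ : ℂ → ℂ) (f : ℝ → ℂ → ℂ) (z : Fin k₀ → ℝ → ℂ)
    (hf₀ : DifferentiableOn ℂ f₀ (ball 0 δ₀))
    (hg₀diff : DifferentiableOn ℂ g₀ (ball 0 δ₀))
    (hg₀ne : ∀ w ∈ ball (0 : ℂ) δ₀, g₀ w ≠ 0)
    (hfactor : ∀ w ∈ ball (0 : ℂ) δ₀, f₀ w = w ^ k₀ * g₀ w)
    (hfb : ∀ b ∈ Ioc (0 : ℝ) b₀, DifferentiableOn ℂ (f b)
      {w : ℂ | ‖w‖ < δ₀ ∧ w.im < I₀ * b})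
    (hbdd : ∃ C : ℝ, ∀ b ∈ Ioc (0 : ℝ) b₀, ∀ n ≤ k₀ + 1,
      ∀ w ∈ {w : ℂ | ‖w‖ < δ₀ ∧ w.im < I₀ * b},
        ‖iteratedDeriv n (f b) w‖ ≤ C)
    (hconv : ∀ ε > (0 : ℝ), ∃ b' ∈ Ioc (0 : ℝ) b₀, ∀ b ∈ Ioc (0 : ℝ) b', ∀ n ≤ k₀ + 1,
      ∀ w ∈ {w : ℂ | ‖w‖ < δ₀ ∧ w.im < I₀ * b},
        ‖iteratedDeriv n (f b) w - iteratedDeriv n f₀ w‖ ≤ ε)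
    (hz0 : ∀ j, z j 0 = 0)
    (hzsmall : ∀ j, ∀ b ∈ Ioc (0 : ℝ) b₀, ‖z j b‖ ≤ I₀ * b / 3)
    (hzzero : ∀ j, ∀ b ∈ Ioc (0 : ℝ) b₀, f b (z j b) = 0)
    (hzdist : 2 ≤ k₀ → ∀ b ∈ Ioc (0 : ℝ) b₀,
      ∀ j j' : Fin k₀, j ≠ j' → z j b ≠ z j' b)
    (hzequi : 2 ≤ k₀ → ∃ Cstar : ℝ, 1 < Cstar ∧ ∀ b ∈ Ioc (0 : ℝ) b₀,
      ∀ j j' : Fin k₀, j < j' → ¬((j : ℕ) = 0 ∧ (j' : ℕ) = 1) →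
        Cstar⁻¹ * b ≤ ‖z j b - z j' b‖ ∧
        ‖z j b - z j' b‖ ≤ Cstar * b) :
    ∃ δ₁ ∈ Ioc (0 : ℝ) δ₀, ∃ b₁ ∈ Ioc (0 : ℝ) b₀, ∀ b ∈ Ioc (0 : ℝ) b₁,
      ∃ g : ℂ → ℂ,
        DifferentiableOn ℂ g {w : ℂ | ‖w‖ < δ₁ ∧ w.im < I₀ * b} ∧
        (∀ w ∈ {w : ℂ | ‖w‖ < δ₁ ∧ w.im < I₀ * b}, g w ≠ 0) ∧
        (∀ w ∈ {w : ℂ | ‖w‖ < δ₁ ∧ w.im < I₀ * b},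
          f b w = g w * ∏ j : Fin k₀, (w - z j b)) := by
  classical
  have h0ball : (0 : ℂ) ∈ ball (0 : ℂ) δ₀ := by simpa using hδ₀
  set A : ℂ := (k₀ ! : ℂ) * g₀ 0 with hA
  have hAval : iteratedDeriv k₀ f₀ 0 = A := by
    have hfe : f₀ =ᶠ[𝓝 (0 : ℂ)] fun w => w ^ k₀ * g₀ w :=
      Filter.eventuallyEq_of_mem (isOpen_ball.mem_nhds h0ball) hfactor
    rw [aux_iteratedDeriv_congr hfe k₀, aux_pow_mul isOpen_ball h0ball k₀ g₀ hg₀diff]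
  have hAne : A ≠ 0 :=
    mul_ne_zero (Nat.cast_ne_zero.2 (Nat.factorial_ne_zero _)) (hg₀ne 0 h0ball)
  have hApos : 0 < ‖A‖ := norm_pos_iff.2 hAne
  set ε : ℝ := ‖A‖ / 4 with hε
  have hεpos : 0 < ε := by positivity
  have hD₀cont : ContinuousAt (iteratedDeriv k₀ f₀) 0 :=
    ((aux_iterDiffOn isOpen_ball hf₀ k₀).continuousOn).continuousAt (isOpen_ball.mem_nhds h0ball)
  obtain ⟨δ', hδ'pos, hδ'⟩ := Metric.continuousAt_iff.1 hD₀cont ε hεpos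
  obtain ⟨b', hb'mem, hb'⟩ := hconv ε hεpos
  set δ₁ : ℝ := min δ' δ₀ with hδ₁def
  have hδ₁pos : 0 < δ₁ := lt_min hδ'pos hδ₀
  set b₁ : ℝ := min b' (δ₁ / I₀) with hb₁def
  have hb₁pos : 0 < b₁ := lt_min hb'mem.1 (div_pos hδ₁pos hI₀)
  refine ⟨δ₁, ⟨hδ₁pos, min_le_right _ _⟩, b₁,
    ⟨hb₁pos, le_trans (min_le_left _ _) hb'mem.2⟩, ?_⟩
  intro b hb
  have hbpos : 0 < b := hb.1
  have hbb' : b ≤ b' := le_trans hb.2 (min_le_left _ _)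
  have hbb₀ : b ≤ b₀ := le_trans hbb' hb'mem.2
  have hbI : b ≤ δ₁ / I₀ := le_trans hb.2 (min_le_right _ _)
  have hIb : I₀ * b ≤ δ₁ := by
    rw [le_div_iff₀ hI₀] at hbI
    linarith [hbI]
  set U : Set ℂ := {w : ℂ | ‖w‖ < δ₁ ∧ w.im < I₀ * b} with hUdef
  have hUopen : IsOpen U := by
    rw [hUdef, setOf_and]
    exact (isOpen_lt continuous_norm continuous_const).inter
      (isOpen_lt Complex.continuous_im continuous_const)
  have hUconv : Convex ℝ U := by
    rw [hUdef, setOf_and]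
    have h1 : {w : ℂ | ‖w‖ < δ₁} = ball 0 δ₁ := by
      ext w; simp [mem_ball, Complex.dist_eq]
    rw [h1]
    exact (convex_ball _ _).inter (convex_halfSpace_im_lt _)
  have hUsub : U ⊆ {w : ℂ | ‖w‖ < δ₀ ∧ w.im < I₀ * b} :=
    fun w hw => ⟨lt_of_lt_of_le hw.1 (min_le_right _ _), hw.2⟩
  have hfbU : DifferentiableOn ℂ (f b) U := (hfb b ⟨hbpos, hbb₀⟩).mono hUsub
  set p : Fin k₀ → ℂ := fun j => z j b with hpdef
  have hpU : ∀ j, p j ∈ U := by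
    intro j
    have h1 := hzsmall j b ⟨hbpos, hbb₀⟩
    have hIbpos : 0 < I₀ * b := mul_pos hI₀ hbpos
    constructor
    · show ‖z j b‖ < δ₁
      calc ‖z j b‖ ≤ I₀ * b / 3 := h1
        _ < I₀ * b := by linarith
        _ ≤ δ₁ := hIb
    · show (z j b).im < I₀ * b
      calc (z j b).im ≤ ‖z j b‖ := Complex.im_le_norm _
        _ ≤ I₀ * b / 3 := h1
        _ < I₀ * b := by linarith
  have hpz : ∀ j, f b (p j) = 0 := fun j => hzzero j b ⟨hbpos, hbb₀⟩
  have hpinj : Function.Injective p := by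
    by_cases h2 : 2 ≤ k₀
    · intro i j hij
      by_contra hne
      exact hzdist h2 b ⟨hbpos, hbb₀⟩ i j hne hij
    · intro i j _
      have hi := i.isLt
      have hj := j.isLt
      exact Fin.ext (by omega)
  set c : ℂ := A / (k₀ ! : ℂ) with hcdef
  set P : ℂ → ℂ := fun w => ∏ j, (w - p j) with hPdef
  have hPdiff : Differentiable ℂ P := by
    rw [hPdef]
    exact Differentiable.fun_finsetProd fun i _ => differentiable_id.sub_const _
  set hfun : ℂ → ℂ := fun w => f b w - c * P w with hfundef
  have hhdiff : DifferentiableOn ℂ hfun U :=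
    hfbU.sub ((hPdiff.differentiableOn).const_mul c)
  have hhz : ∀ j, hfun (p j) = 0 := by
    intro j
    rw [hfundef]
    show f b (p j) - c * P (p j) = 0
    rw [hpz j, hPdef]
    show (0 : ℂ) - c * ∏ j', (p j - p j') = 0
    rw [Finset.prod_eq_zero (Finset.mem_univ j) (sub_self (p j))]
    ring
  have hhbound : ∀ w ∈ U, ‖iteratedDeriv k₀ hfun w‖ ≤ ‖A‖ / 2 := by
    intro w hw
    have hsub := aux_itersub hUopen hfbU hPdiff c k₀ w hw
    rw [hfundef]
    rw [hsub, aux_prod_deriv k₀ p w]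
    have hcA : c * (k₀ ! : ℂ) = A :=
      div_mul_cancel₀ _ (Nat.cast_ne_zero.2 (Nat.factorial_ne_zero _))
    rw [hcA]
    have h1 : ‖iteratedDeriv k₀ (f b) w - iteratedDeriv k₀ f₀ w‖ ≤ ε :=
      hb' b ⟨hbpos, hbb'⟩ k₀ (Nat.le_succ _) w (hUsub hw)
    have h2 : ‖iteratedDeriv k₀ f₀ w - A‖ ≤ ε := by
      have hdist : dist w 0 < δ' := by
        rw [dist_zero_right]
        exact lt_of_lt_of_le hw.1 (min_le_left _ _)
      have h3 := hδ' hdist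
      rw [dist_eq_norm, hAval] at h3
      exact le_of_lt h3
    calc ‖iteratedDeriv k₀ (f b) w - A‖
        = ‖(iteratedDeriv k₀ (f b) w - iteratedDeriv k₀ f₀ w) + (iteratedDeriv k₀ f₀ w - A)‖ := by
          ring_nf
      _ ≤ ‖iteratedDeriv k₀ (f b) w - iteratedDeriv k₀ f₀ w‖ + ‖iteratedDeriv k₀ f₀ w - A‖ :=
          norm_add_le _ _
      _ ≤ ε + ε := add_le_add h1 h2
      _ = ‖A‖ / 2 := by rw [hε]; ring
  refine ⟨iterDslope k₀ p (f b), iterDslope_diffOn hUopen k₀ p (f b) hfbU hpU, ?_,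
    fun w _ => iterDslope_factor k₀ p (f b) hpinj hpz w⟩
  intro w hw
  have hbd := iterDslope_bound k₀ hUopen hUconv p hfun (‖A‖ / 2) hhdiff hpU hhz hpinj hhbound w hw
  have hlin := iterDslope_lin hUopen c k₀ p (f b) P hfbU hPdiff.differentiableOn hpU w
  have hone := iterDslope_prod k₀ p hpinj w
  rw [hfundef] at hbd
  rw [hlin] at hbd
  rw [← hPdef] at hone
  rw [hone, mul_one] at hbd
  intro hgw0
  rw [hgw0, zero_sub, norm_neg] at hbd
  have hcnorm : ‖c‖ = ‖A‖ / (k₀ ! : ℝ) := by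
    rw [hcdef, norm_div]
    norm_num
  rw [hcnorm] at hbd
  have hkpos : (0 : ℝ) < (k₀ ! : ℝ) := by
    exact_mod_cast Nat.factorial_pos k₀
  rw [div_le_div_iff₀ hkpos hkpos] at hbd
  nlinarith [hbd, hApos, hkpos]
end

section
/- Let F : [1,∞) → ℝ be continuous with |F(r)| ≤ C r^{−2} e^{−r} for all r ≥ 1, and let u ∈ C²([1,∞)) be bounded, solve u″ = u + F on [1,∞), and satisfy u(r) → 0 as r → ∞. Then there exists κ ∈ ℝ and C′ > 0 such that |u(r) − κ e^{−r}| ≤ C′ r^{−1} e^{−r} for all r ≥ 1. -/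
open Set
open MeasureTheory Filter intervalIntegral

lemma aux_blowup19 (u d : ℝ → ℝ) (r0 : ℝ)
    (hc : ContinuousOn u (Ici r0))
    (hd : ∀ x ∈ Ioi r0, HasDerivAt u (d x) x)
    (hd1 : ∀ x ∈ Ioi r0, 1 ≤ d x)
    (hlim : Filter.Tendsto u Filter.atTop (nhds 0)) : False := by
  have hD : DifferentiableOn ℝ u (interior (Ici r0)) := by
    rw [interior_Ici]
    exact fun x hx => (hd x hx).differentiableAt.differentiableWithinAt
  have key := (convex_Ici r0).mul_sub_le_image_sub_of_le_deriv hc hD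
    (fun x hx => by
      rw [interior_Ici] at hx
      rw [(hd x hx).deriv]; exact hd1 x hx)
  have h1 : ∀ᶠ y in atTop, u y < 1 := hlim.eventually_lt_const one_pos
  obtain ⟨y, hy1, hy2⟩ := (h1.and (eventually_ge_atTop (r0 + |u r0| + 2))).exists
  have hyr : r0 ≤ y := by
    have := abs_nonneg (u r0); linarith
  have := key r0 self_mem_Ici y hyr hyr
  have := neg_abs_le (u r0)
  linarith


/-- Sharp exponential asymptotics from the ODE `u″ = u + F`: if `F` is continuous on
`[1,∞)` with `|F(r)| ≤ C r⁻² e^{−r}`, and `u ∈ C²([1,∞))` is bounded, solves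
`u″ = u + F` on `[1,∞)` and tends to `0` at infinity, then there are `κ ∈ ℝ` and
`C′ > 0` with `|u(r) − κ e^{−r}| ≤ C′ r⁻¹ e^{−r}` for all `r ≥ 1`. -/
theorem statement19 (C : ℝ) (F u : ℝ → ℝ)
    (hF : ContinuousOn F (Ici 1))
    (hFbound : ∀ r ∈ Ici (1 : ℝ), |F r| ≤ C * Real.exp (-r) / r ^ 2)
    (hu : ContDiffOn ℝ 2 u (Ici 1))
    (hbdd : ∃ M : ℝ, ∀ r ∈ Ici (1 : ℝ), |u r| ≤ M)
    (heq : ∀ r ∈ Ici (1 : ℝ), iteratedDerivWithin 2 u (Ici 1) r = u r + F r)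
    (hlim : Filter.Tendsto u Filter.atTop (nhds 0)) :
    ∃ κ : ℝ, ∃ C' : ℝ, 0 < C' ∧ ∀ r ∈ Ici (1 : ℝ),
      |u r - κ * Real.exp (-r)| ≤ C' * Real.exp (-r) / r := by
  have hUD : UniqueDiffOn ℝ (Ici (1:ℝ)) := uniqueDiffOn_Ici 1
  set v : ℝ → ℝ := derivWithin u (Ici 1) with hvdef
  have hC : 0 ≤ C := by
    have h0 := (abs_nonneg (F 1)).trans (hFbound 1 self_mem_Ici)
    have := Real.exp_pos (-1:ℝ)
    nlinarith
  have hv1 : ContDiffOn ℝ 1 v (Ici 1) := hu.derivWithin hUD (by norm_num)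
  have hucont : ContinuousOn u (Ici 1) := hu.continuousOn
  have hvcont : ContinuousOn v (Ici 1) := hv1.continuousOn
  have hudiff : DifferentiableOn ℝ u (Ici 1) := hu.differentiableOn (by norm_num)
  have hvdiff : DifferentiableOn ℝ v (Ici 1) := hv1.differentiableOn one_ne_zero
  have hu' : ∀ x : ℝ, 1 < x → HasDerivAt u (v x) x := fun x hx =>
    ((hudiff x (mem_Ici.mpr hx.le)).hasDerivWithinAt).hasDerivAt (Ici_mem_nhds hx)
  have hiter : ∀ x ∈ Ici (1:ℝ), derivWithin v (Ici 1) x = u x + F x := by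
    intro x hx
    have h2 : iteratedDerivWithin 2 u (Ici 1) x = derivWithin v (Ici 1) x := by
      rw [show (2:ℕ) = 1+1 from rfl, iteratedDerivWithin_succ]
      exact derivWithin_congr (fun y hy => congrFun iteratedDerivWithin_one y)
        (congrFun iteratedDerivWithin_one x)
    rw [← h2]; exact heq x hx
  have hv' : ∀ x : ℝ, 1 < x → HasDerivAt v (u x + F x) x := by
    intro x hx
    have := ((hvdiff x (mem_Ici.mpr hx.le)).hasDerivWithinAt).hasDerivAt (Ici_mem_nhds hx)
    rwa [hiter x (mem_Ici.mpr hx.le)] at this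
  -- the integrating-factor functions
  set g : ℝ → ℝ := fun x => Real.exp (-x) * (v x + u x) with hgdef
  set f : ℝ → ℝ := fun x => Real.exp (-x) * F x with hfdef
  set h : ℝ → ℝ := fun x => Real.exp x * u x with hhdef
  set φ : ℝ → ℝ := fun x => Real.exp x * (v x + u x) with hφdef
  have hexpcont : ContinuousOn (fun x : ℝ => Real.exp (-x)) (Ici 1) :=
    (Real.continuous_exp.comp continuous_neg).continuousOn
  have hgcont : ContinuousOn g (Ici 1) := hexpcont.mul (hvcont.add hucont)
  have hfcont : ContinuousOn f (Ici 1) := hexpcont.mul hF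
  have hhcont : ContinuousOn h (Ici 1) := Real.continuous_exp.continuousOn.mul hucont
  have hφcont : ContinuousOn φ (Ici 1) := Real.continuous_exp.continuousOn.mul (hvcont.add hucont)
  have hg' : ∀ x : ℝ, 1 < x → HasDerivAt g (f x) x := by
    intro x hx
    have he : HasDerivAt (fun y : ℝ => Real.exp (-y)) (-Real.exp (-x)) x := by
      simpa [Function.comp_def] using ((Real.hasDerivAt_exp (-x)).comp x ((hasDerivAt_id x).neg))
    have := he.mul ((hv' x hx).add (hu' x hx))
    refine this.congr_deriv ?_
    simp only [hfdef, Pi.add_apply]; ring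
  have hh' : ∀ x : ℝ, 1 < x → HasDerivAt h (φ x) x := by
    intro x hx
    have := (Real.hasDerivAt_exp x).mul (hu' x hx)
    refine this.congr_deriv ?_
    simp only [hφdef]; ring
  -- fundamental theorem of calculus helper
  have FTC : ∀ (ψ d : ℝ → ℝ), ContinuousOn ψ (Ici 1) → ContinuousOn d (Ici 1) →
      (∀ x : ℝ, 1 < x → HasDerivAt ψ (d x) x) →
      ∀ a : ℝ, 1 ≤ a → ∀ b : ℝ, a ≤ b → ψ b - ψ a = ∫ x in a..b, d x := by
    intro ψ d hψ hdc hder a ha b hab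
    have hsub : Icc a b ⊆ Ici 1 := fun x hx => le_trans ha hx.1
    refine (intervalIntegral.integral_eq_sub_of_hasDeriv_right_of_le hab (hψ.mono hsub)
      (fun x hx => (hder x (lt_of_le_of_lt ha hx.1)).hasDerivWithinAt) ?_).symm
    exact (hdc.mono (by rw [uIcc_of_le hab]; exact hsub)).intervalIntegrable
  -- integrability of f on (1, ∞)
  have hfmeas : ∀ r : ℝ, 1 ≤ r → AEStronglyMeasurable f (volume.restrict (Ioi r)) :=
    fun r hr => ((hfcont.mono (fun x hx => le_trans hr (le_of_lt hx))).aestronglyMeasurable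
      measurableSet_Ioi)
  have hfbd : ∀ r : ℝ, 1 ≤ r → ∀ x ∈ Ioi r, ‖f x‖ ≤ C * Real.exp (-r) / r ^ 2 * Real.exp (-x) := by
    intro r hr x hx
    have hx1 : (1:ℝ) ≤ x := le_trans hr (le_of_lt hx)
    have hrx : r ≤ x := le_of_lt hx
    have hFb := hFbound x (mem_Ici.mpr hx1)
    have hex : (0:ℝ) < Real.exp (-x) := Real.exp_pos _
    have h1 : ‖f x‖ = Real.exp (-x) * |F x| := by
      simp only [hfdef, norm_mul, Real.norm_eq_abs, abs_of_pos hex]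
    rw [h1]
    have h2 : |F x| ≤ C * Real.exp (-r) / r ^ 2 := by
      refine le_trans hFb ?_
      have hr0 : (0:ℝ) < r := lt_of_lt_of_le one_pos hr
      have hx0 : (0:ℝ) < x := lt_of_lt_of_le one_pos hx1
      have hee : Real.exp (-x) ≤ Real.exp (-r) := Real.exp_le_exp.mpr (by linarith)
      have hxx : r ^ 2 ≤ x ^ 2 := by nlinarith
      gcongr
    calc Real.exp (-x) * |F x| ≤ Real.exp (-x) * (C * Real.exp (-r) / r ^ 2) := by
          exact mul_le_mul_of_nonneg_left h2 hex.le
      _ = C * Real.exp (-r) / r ^ 2 * Real.exp (-x) := by ring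
  have hexpint : ∀ r : ℝ, IntegrableOn (fun x : ℝ => Real.exp (-x)) (Ioi r) := by
    intro r
    have := exp_neg_integrableOn_Ioi r one_pos
    simpa using this
  have hfint : ∀ r : ℝ, 1 ≤ r → IntegrableOn f (Ioi r) := by
    intro r hr
    refine Integrable.mono' ((hexpint r).const_mul (C * Real.exp (-r) / r ^ 2)) (hfmeas r hr) ?_
    rw [ae_restrict_iff' measurableSet_Ioi]
    exact Filter.Eventually.of_forall (hfbd r hr)
  -- g x := e^{-x}(u'+u) tends to a limit L at infinity
  set L : ℝ := g 1 + ∫ x in Ioi (1:ℝ), f x with hLdef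
  have hgtend : Tendsto g atTop (nhds L) := by
    have t1 := intervalIntegral_tendsto_integral_Ioi 1 (hfint 1 le_rfl) tendsto_id
    have t2 : Tendsto (fun R => g 1 + ∫ x in (1:ℝ)..R, f x) atTop (nhds L) :=
      tendsto_const_nhds.add t1
    refine t2.congr' ?_
    filter_upwards [eventually_ge_atTop (1:ℝ)] with R hR
    rw [← FTC g f hgcont hfcont hg' 1 le_rfl R hR]; ring
  have hvg : ∀ x : ℝ, v x + u x = Real.exp x * g x := by
    intro x
    simp [hgdef, ← mul_assoc, ← Real.exp_add]
  have h2 : ∀ᶠ x in atTop, |u x| < 1 := by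
    have := (Metric.tendsto_nhds.mp hlim) 1 one_pos
    simpa [Real.dist_eq] using this
  have hL0 : L = 0 := by
    by_contra hL
    rcases lt_or_gt_of_ne hL with hneg | hpos
    · -- L < 0 : then u' → -∞ and u decreases without bound
      have h1 : ∀ᶠ x in atTop, g x < L/2 := hgtend.eventually_lt_const (by linarith)
      have h3 : ∀ᶠ x in atTop, 4 / (-L) ≤ Real.exp x :=
        Real.tendsto_exp_atTop.eventually_ge_atTop _
      obtain ⟨r0, hr0⟩ := Filter.eventually_atTop.mp ((h1.and h2).and (h3.and (eventually_gt_atTop (1:ℝ))))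
      have hr01 : (1:ℝ) < r0 := (hr0 r0 le_rfl).2.2
      refine aux_blowup19 (fun x => -u x) (fun x => -(v x)) r0
        ((hucont.mono (Ici_subset_Ici.mpr hr01.le)).neg)
        (fun x hx => (hu' x (lt_trans hr01 hx)).neg) ?_ (by simpa using hlim.neg)
      intro x hx
      obtain ⟨⟨hgx, hux⟩, hex, hx1⟩ := hr0 x (le_of_lt hx)
      have hvx : v x = Real.exp x * g x - u x := by have := hvg x; linarith
      have e1 : Real.exp x * g x ≤ Real.exp x * (L/2) :=
        mul_le_mul_of_nonneg_left hgx.le (Real.exp_pos x).le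
      have e2 : Real.exp x * (L/2) ≤ (4 / (-L)) * (L/2) :=
        mul_le_mul_of_nonpos_right hex (by linarith)
      have e3 : (4 / (-L)) * (L/2) = -2 := by field_simp; ring
      have := abs_lt.mp hux
      simp only [hvx]
      linarith
    · -- L > 0 : then u' → ∞ and u increases without bound
      have h1 : ∀ᶠ x in atTop, L/2 < g x := hgtend.eventually_const_lt (by linarith)
      have h3 : ∀ᶠ x in atTop, 4 / L ≤ Real.exp x :=
        Real.tendsto_exp_atTop.eventually_ge_atTop _
      obtain ⟨r0, hr0⟩ := Filter.eventually_atTop.mp ((h1.and h2).and (h3.and (eventually_gt_atTop (1:ℝ))))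
      have hr01 : (1:ℝ) < r0 := (hr0 r0 le_rfl).2.2
      refine aux_blowup19 u v r0
        (hucont.mono (Ici_subset_Ici.mpr hr01.le))
        (fun x hx => hu' x (lt_trans hr01 hx)) ?_ hlim
      intro x hx
      obtain ⟨⟨hgx, hux⟩, hex, hx1⟩ := hr0 x (le_of_lt hx)
      have hvx : v x = Real.exp x * g x - u x := by have := hvg x; linarith
      have e1 : Real.exp x * (L/2) ≤ Real.exp x * g x :=
        mul_le_mul_of_nonneg_left hgx.le (Real.exp_pos x).le
      have e2 : (4 / L) * (L/2) ≤ Real.exp x * (L/2) :=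
        mul_le_mul_of_nonneg_right hex (by linarith)
      have e3 : (4 / L) * (L/2) = 2 := by field_simp; ring
      have := abs_lt.mp hux
      simp only [hvx]
      linarith
  -- pointwise representation and decay of g
  have hgr : ∀ r : ℝ, 1 ≤ r → g r = - ∫ x in Ioi r, f x := by
    intro r hr
    have t1 := intervalIntegral_tendsto_integral_Ioi r (hfint r hr) tendsto_id
    have t2 : Tendsto (fun R => g r + ∫ x in r..R, f x) atTop
        (nhds (g r + ∫ x in Ioi r, f x)) := tendsto_const_nhds.add t1
    have t3 : Tendsto g atTop (nhds (g r + ∫ x in Ioi r, f x)) := by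
      refine t2.congr' ?_
      filter_upwards [eventually_ge_atTop r] with R hR
      rw [← FTC g f hgcont hfcont hg' r hr R hR]; ring
    have := tendsto_nhds_unique t3 hgtend
    rw [hL0] at this
    linarith
  have hgbound : ∀ r : ℝ, 1 ≤ r → |g r| ≤ C * Real.exp (-r) / r ^ 2 * Real.exp (-r) := by
    intro r hr
    rw [hgr r hr, abs_neg, ← Real.norm_eq_abs]
    have hmaj : Integrable (fun x => C * Real.exp (-r) / r ^ 2 * Real.exp (-x))
        (volume.restrict (Ioi r)) := (hexpint r).const_mul _
    calc ‖∫ x in Ioi r, f x‖ ≤ ∫ x in Ioi r, C * Real.exp (-r) / r ^ 2 * Real.exp (-x) :=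
          norm_integral_le_of_norm_le hmaj
            (by rw [ae_restrict_iff' measurableSet_Ioi]
                exact Filter.Eventually.of_forall (hfbd r hr))
      _ = C * Real.exp (-r) / r ^ 2 * ∫ x in Ioi r, Real.exp (-x) := by
          rw [MeasureTheory.integral_const_mul]
      _ = C * Real.exp (-r) / r ^ 2 * Real.exp (-r) := by rw [integral_exp_neg_Ioi]
  -- φ is integrable with an O(x⁻²) bound
  have hφbd : ∀ r : ℝ, 1 ≤ r → ∀ x ∈ Ioi r, ‖φ x‖ ≤ C * x ^ (-2:ℝ) := by
    intro r hr x hx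
    have hx1 : (1:ℝ) ≤ x := le_trans hr (le_of_lt hx)
    have hx0 : (0:ℝ) < x := lt_of_lt_of_le one_pos hx1
    have hrw : x ^ (-2:ℝ) = (x^2)⁻¹ := by
      rw [Real.rpow_neg hx0.le, show ((2:ℝ) = ((2:ℕ):ℝ)) by norm_num, Real.rpow_natCast]
    have hφx : φ x = Real.exp x * (Real.exp x * g x) := by
      simp only [hφdef]; rw [hvg x]
    have hgb := hgbound x hx1
    have hxe : Real.exp x * Real.exp (-x) = 1 := by rw [← Real.exp_add]; simp
    rw [hφx, hrw, Real.norm_eq_abs]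
    calc |Real.exp x * (Real.exp x * g x)| = Real.exp x * Real.exp x * |g x| := by
          rw [abs_mul, abs_mul, abs_of_pos (Real.exp_pos x)]; ring
      _ ≤ Real.exp x * Real.exp x * (C * Real.exp (-x) / x ^ 2 * Real.exp (-x)) := by
          exact mul_le_mul_of_nonneg_left hgb (by positivity)
      _ = C * (x^2)⁻¹ * ((Real.exp x * Real.exp (-x)) * (Real.exp x * Real.exp (-x))) := by
          ring
      _ = C * (x^2)⁻¹ := by rw [hxe]; ring
  have hrpowint : ∀ r : ℝ, 0 < r → IntegrableOn (fun x : ℝ => x ^ (-2:ℝ)) (Ioi r) :=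
    fun r hr => integrableOn_Ioi_rpow_of_lt (by norm_num) hr
  have hφmeas : ∀ r : ℝ, 1 ≤ r → AEStronglyMeasurable φ (volume.restrict (Ioi r)) :=
    fun r hr => ((hφcont.mono (fun x hx => le_trans hr (le_of_lt hx))).aestronglyMeasurable
      measurableSet_Ioi)
  have hφint : ∀ r : ℝ, 1 ≤ r → IntegrableOn φ (Ioi r) := by
    intro r hr
    refine Integrable.mono' (((hrpowint r (lt_of_lt_of_le one_pos hr)).const_mul C)) (hφmeas r hr) ?_
    rw [ae_restrict_iff' measurableSet_Ioi]
    exact Filter.Eventually.of_forall (hφbd r hr)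
  -- h r := e^r u r converges to κ
  set κ : ℝ := h 1 + ∫ x in Ioi (1:ℝ), φ x with hκdef
  have hhtend : Tendsto h atTop (nhds κ) := by
    have t1 := intervalIntegral_tendsto_integral_Ioi 1 (hφint 1 le_rfl) tendsto_id
    have t2 : Tendsto (fun R => h 1 + ∫ x in (1:ℝ)..R, φ x) atTop (nhds κ) :=
      tendsto_const_nhds.add t1
    refine t2.congr' ?_
    filter_upwards [eventually_ge_atTop (1:ℝ)] with R hR
    rw [← FTC h φ hhcont hφcont hh' 1 le_rfl R hR]; ring
  have hκr : ∀ r : ℝ, 1 ≤ r → κ - h r = ∫ x in Ioi r, φ x := by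
    intro r hr
    have t1 := intervalIntegral_tendsto_integral_Ioi r (hφint r hr) tendsto_id
    have t2 : Tendsto (fun R => h r + ∫ x in r..R, φ x) atTop
        (nhds (h r + ∫ x in Ioi r, φ x)) := tendsto_const_nhds.add t1
    have t3 : Tendsto h atTop (nhds (h r + ∫ x in Ioi r, φ x)) := by
      refine t2.congr' ?_
      filter_upwards [eventually_ge_atTop r] with R hR
      rw [← FTC h φ hhcont hφcont hh' r hr R hR]; ring
    have := tendsto_nhds_unique t3 hhtend
    linarith
  -- conclusion
  refine ⟨κ, C + 1, by positivity, ?_⟩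
  intro r hr
  have hr1 : (1:ℝ) ≤ r := hr
  have hr0 : (0:ℝ) < r := lt_of_lt_of_le one_pos hr1
  have hκb : |κ - h r| ≤ C / r := by
    rw [hκr r hr1, ← Real.norm_eq_abs]
    have hmaj : Integrable (fun x : ℝ => C * x ^ (-2:ℝ)) (volume.restrict (Ioi r)) :=
      (hrpowint r hr0).const_mul C
    calc ‖∫ x in Ioi r, φ x‖ ≤ ∫ x in Ioi r, C * x ^ (-2:ℝ) :=
          norm_integral_le_of_norm_le hmaj
            (by rw [ae_restrict_iff' measurableSet_Ioi]
                exact Filter.Eventually.of_forall (hφbd r hr1))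
      _ = C * ∫ x in Ioi r, x ^ (-2:ℝ) := by rw [MeasureTheory.integral_const_mul]
      _ = C / r := by
          rw [integral_Ioi_rpow_of_lt (by norm_num) hr0]
          norm_num [Real.rpow_neg_one]
          ring
  have hur : Real.exp (-r) * h r = u r := by
    simp [hhdef, ← mul_assoc, ← Real.exp_add]
  have hrw : u r - κ * Real.exp (-r) = Real.exp (-r) * (h r - κ) := by
    rw [← hur]; ring
  rw [hrw, abs_mul, abs_of_pos (Real.exp_pos _)]
  have : |h r - κ| ≤ C / r := by rwa [abs_sub_comm] at hκb
  calc Real.exp (-r) * |h r - κ| ≤ Real.exp (-r) * (C / r) :=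
        mul_le_mul_of_nonneg_left this (Real.exp_pos _).le
    _ ≤ (C + 1) * Real.exp (-r) / r := by
        rw [div_eq_mul_inv, div_eq_mul_inv]
        have := Real.exp_pos (-r)
        nlinarith [inv_pos.mpr hr0]
end
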